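/- Let u be a real-valued random variable on a probability space, let α > 1 be a real number, and let s, t be natural numbers with 1 ≤ s < t and E[|u|^t] < ∞. Then ((α^s − 1) · E[|u|^s])^{1/s} ≤ ((α^t − 1) · E[|u|^t])^{1/t}. -/

import Mathlib

open MeasureTheory

open scoped ENNReal

lemma coef_ineq (α : ℝ) (hα : 1 < α) (s t : ℕ) (hs : 1 ≤ s) (hst : s < t) :
    (α ^ s - 1) ^ (1 / (s:ℝ)) ≤ (α ^ t - 1) ^ (1 / (t:ℝ)) := by
  have hs0 : (0:ℝ) < s := by exact_mod_cast hs
  have ht0' : 0 < t := by omega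
  have ht0 : (0:ℝ) < t := by exact_mod_cast ht0'
  set a : ℝ := α ^ s - 1 with ha_def
  have ha : 0 ≤ a := by
    have : (1:ℝ) ≤ α ^ s := one_le_pow₀ hα.le
    linarith
  have hr : (1:ℝ) ≤ (t:ℝ) / s := by
    rw [le_div_iff₀ hs0]; exact_mod_cast (by simpa using hst.le)
  set r : ℝ := (t:ℝ) / s with hr_def
  have key : a ^ r + 1 ≤ (a + 1) ^ r := by
    have h := NNReal.add_rpow_le_rpow_add a.toNNReal 1 hr
    have h1 : ((a.toNNReal : ℝ)) = a := Real.coe_toNNReal a ha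
    have h2 := NNReal.coe_le_coe.mpr h
    push_cast [NNReal.coe_rpow] at h2
    rw [h1] at h2
    simpa [Real.one_rpow] using h2
  have hpow : (a + 1) ^ r = α ^ t := by
    have : a + 1 = α ^ s := by ring
    rw [this, ← Real.rpow_natCast α s, ← Real.rpow_mul (by linarith : (0:ℝ) ≤ α)]
    rw [hr_def]
    rw [mul_div_cancel₀ _ hs0.ne']
    exact Real.rpow_natCast α t
  have key2 : a ^ r ≤ α ^ t - 1 := by rw [← hpow]; linarith
  have := Real.rpow_le_rpow (by positivity) key2 (by positivity : (0:ℝ) ≤ 1 / t)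
  rw [← Real.rpow_mul ha] at this
  have hexp : r * (1 / (t:ℝ)) = 1 / s := by
    rw [hr_def]; field_simp
  rwa [hexp] at this

/-- Scaled Lyapunov inequality (Lemma 3.3 of the paper): for a real random variable `u`,
`α > 1` and naturals `1 ≤ s < t` with `E[|u|^t] < ∞`,
`((α^s − 1)·E[|u|^s])^{1/s} ≤ ((α^t − 1)·E[|u|^t])^{1/t}`. -/
theorem scaled_lyapunov_inequality {Ω : Type*} [MeasurableSpace Ω]
    (P : Measure Ω) [IsProbabilityMeasure P]
    (u : Ω → ℝ) (hu : Measurable u)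
    (α : ℝ) (hα : 1 < α)
    (s t : ℕ) (hs : 1 ≤ s) (hst : s < t)
    (ht : Integrable (fun ω => |u ω| ^ t) P) :
    ((α ^ s - 1) * ∫ ω, |u ω| ^ s ∂P) ^ (1 / (s : ℝ))
      ≤ ((α ^ t - 1) * ∫ ω, |u ω| ^ t ∂P) ^ (1 / (t : ℝ)) := by
  have hmeas : AEStronglyMeasurable u P := hu.aestronglyMeasurable
  have hsne : ((s:ℝ≥0∞)) ≠ 0 := by simp; omega
  have htne : ((t:ℝ≥0∞)) ≠ 0 := by simp; omega
  have hstop : ((s:ℝ≥0∞)) ≠ ⊤ := by simp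
  have httop : ((t:ℝ≥0∞)) ≠ ⊤ := by simp
  have hut : MemLp u (t:ℝ≥0∞) P := by
    rw [← memLp_norm_rpow_iff hmeas htne httop, ENNReal.div_self htne httop,
      memLp_one_iff_integrable]
    simpa [ENNReal.toReal_natCast, Real.rpow_natCast, Real.norm_eq_abs] using ht
  have hus : MemLp u (s:ℝ≥0∞) P := hut.mono_exponent (by exact_mod_cast hst.le)
  have hsn := hus.eLpNorm_eq_integral_rpow_norm hsne hstop
  have htn := hut.eLpNorm_eq_integral_rpow_norm htne httop
  have hle := eLpNorm_le_eLpNorm_of_exponent_le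
    (show (s:ℝ≥0∞) ≤ t by exact_mod_cast hst.le) hmeas (μ := P) (f := u)
  rw [hsn, htn] at hle
  have hIs : (0:ℝ) ≤ ∫ ω, |u ω| ^ s ∂P := by positivity
  have hIt : (0:ℝ) ≤ ∫ ω, |u ω| ^ t ∂P := by positivity
  have hlyap : (∫ ω, |u ω| ^ s ∂P) ^ (1 / (s:ℝ)) ≤ (∫ ω, |u ω| ^ t ∂P) ^ (1 / (t:ℝ)) := by
    have h2 := (ENNReal.ofReal_le_ofReal_iff (by positivity)).mp hle
    simpa [ENNReal.toReal_natCast, Real.rpow_natCast, Real.norm_eq_abs, one_div] using h2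
  have hca : (0:ℝ) ≤ α ^ s - 1 := by
    have : (1:ℝ) ≤ α ^ s := one_le_pow₀ hα.le
    linarith
  have hcb : (0:ℝ) ≤ α ^ t - 1 := by
    have : (1:ℝ) ≤ α ^ t := one_le_pow₀ hα.le
    linarith
  rw [Real.mul_rpow hca hIs, Real.mul_rpow hcb hIt]
  exact mul_le_mul (coef_ineq α hα s t hs hst) hlyap (Real.rpow_nonneg hIs _)
    (Real.rpow_nonneg hcb _)
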